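/- arXiv:2601.15077 — 4 statements merged into one kernel-verified Lean document; each statement's English description precedes it below -/
import Mathlib

section
/- Let X be a real Hilbert space, let A₁, …, A_m be nonempty closed convex subsets of X with nonempty intersection A = ⋂ᵢ Aᵢ, and let T = P_{A_m} ∘ ⋯ ∘ P_{A₁} be the composition of the metric projections. Then the fixed-point set of T equals A: {x ∈ X : T(x) = x} = ⋂ᵢ Aᵢ. -/
/-- `P` is the metric (orthogonal) projection onto `C`: for every `x`, `P x` is the
point of `C` minimizing the distance to `x`. -/
def IsMetricProjection {X : Type*} [NormedAddCommGroup X] (C : Set X) (P : X → X) : Prop :=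
  ∀ x : X, P x ∈ C ∧ ∀ z ∈ C, ‖P x - x‖ ≤ ‖z - x‖

/-- Composition `P (m-1) ∘ ⋯ ∘ P 0` (i.e. `P 0` is applied first). -/
def compProj {X : Type*} {m : ℕ} (P : Fin m → X → X) : X → X :=
  fun x => (List.ofFn P).foldl (fun y f => f y) x

open scoped RealInnerProductSpace

section Aux

variable {X : Type*} [NormedAddCommGroup X] [InnerProductSpace ℝ X]

lemma fejer_ineq {C : Set X} {P : X → X} (hcv : Convex ℝ C)
    (hP : IsMetricProjection C P) {a : X} (ha : a ∈ C) (y : X) :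
    ‖P y - a‖ ^ 2 + ‖P y - y‖ ^ 2 ≤ ‖y - a‖ ^ 2 := by
  obtain ⟨hmem, hmin⟩ := hP y
  haveI : Nonempty C := ⟨⟨P y, hmem⟩⟩
  have hbdd : BddBelow (Set.range fun w : C => ‖y - (w : X)‖) := by
    refine ⟨0, ?_⟩
    rintro r ⟨w, rfl⟩
    exact norm_nonneg _
  have hinf : ‖y - P y‖ = ⨅ w : C, ‖y - (w : X)‖ := by
    refine le_antisymm (le_ciInf fun w => ?_) (ciInf_le hbdd ⟨P y, hmem⟩)
    rw [norm_sub_rev y (P y), norm_sub_rev y (w : X)]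
    exact hmin w w.2
  have hvi := (norm_eq_iInf_iff_real_inner_le_zero hcv hmem).mp hinf a ha
  have hneg : (inner ℝ (y - P y) (a - P y) : ℝ) = -(inner ℝ (y - P y) (P y - a) : ℝ) := by
    rw [← inner_neg_right, neg_sub]
  have expand : ‖y - a‖ ^ 2 = ‖y - P y‖ ^ 2 + 2 * (inner ℝ (y - P y) (P y - a) : ℝ) + ‖P y - a‖ ^ 2 := by
    have h := norm_add_sq_real (y - P y) (P y - a)
    rw [sub_add_sub_cancel] at h
    linarith [h]
  have hrev : ‖P y - y‖ = ‖y - P y‖ := norm_sub_rev _ _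
  rw [hrev]
  linarith [hneg ▸ hvi]

lemma foldl_fix (L : List (X → X)) (x : X) (h : ∀ f ∈ L, f x = x) :
    L.foldl (fun y f => f y) x = x := by
  induction L with
  | nil => rfl
  | cons f L ih =>
    simp only [List.foldl_cons, h f (by simp)]
    exact ih fun g hg => h g (by simp [hg])

lemma foldl_fejer (a : X) (L : List (X → X))
    (hF : ∀ f ∈ L, ∀ y : X, ‖f y - a‖ ^ 2 + ‖f y - y‖ ^ 2 ≤ ‖y - a‖ ^ 2) (y : X) :
    ‖L.foldl (fun z f => f z) y - a‖ ≤ ‖y - a‖ := by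
  induction L generalizing y with
  | nil => simp
  | cons f L ih =>
    have h1 := ih (fun g hg => hF g (by simp [hg])) (f y)
    have h2 := hF f (by simp) y
    have h3 : ‖f y - a‖ ≤ ‖y - a‖ := by
      nlinarith [norm_nonneg (f y - a), norm_nonneg (y - a), norm_nonneg (f y - y)]
    simpa using h1.trans h3

lemma chain_fix (a : X) (L : List (X → X))
    (hF : ∀ f ∈ L, ∀ y : X, ‖f y - a‖ ^ 2 + ‖f y - y‖ ^ 2 ≤ ‖y - a‖ ^ 2) (x : X)
    (hfix : L.foldl (fun z f => f z) x = x) : ∀ f ∈ L, f x = x := by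
  induction L generalizing x with
  | nil => simp
  | cons f L ih =>
    simp only [List.foldl_cons] at hfix
    have h1 := foldl_fejer a L (fun g hg => hF g (by simp [hg])) (f x)
    rw [hfix] at h1
    have h2 := hF f (by simp) x
    have hfx : f x = x := by
      have : ‖f x - x‖ ^ 2 ≤ 0 := by nlinarith [norm_nonneg (f x - a), norm_nonneg (x - a)]
      have : ‖f x - x‖ = 0 := by nlinarith [norm_nonneg (f x - x)]
      rwa [norm_eq_zero, sub_eq_zero] at this
    rw [hfx] at hfix
    intro g hg
    rcases List.mem_cons.mp hg with h | h
    · rw [h, hfx]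
    · exact ih (fun g hg => hF g (by simp [hg])) x hfix g h

end Aux

/-- The fixed-point set of the composed projection operator equals the intersection
of the constraint sets. -/
theorem fixedPointSet_of_composed_projections
    {X : Type*} [NormedAddCommGroup X] [InnerProductSpace ℝ X] [CompleteSpace X]
    {m : ℕ} (A : Fin m → Set X) (P : Fin m → X → X)
    (hne : ∀ i, (A i).Nonempty) (hcl : ∀ i, IsClosed (A i)) (hcv : ∀ i, Convex ℝ (A i))
    (hinter : (⋂ i, A i).Nonempty)
    (hP : ∀ i, IsMetricProjection (A i) (P i)) :
    {x : X | compProj P x = x} = ⋂ i, A i := by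
  obtain ⟨a, ha⟩ := hinter
  have haA : ∀ i, a ∈ A i := fun i => Set.mem_iInter.mp ha i
  ext x
  simp only [Set.mem_setOf_eq, Set.mem_iInter]
  constructor
  · intro hfix
    have hF : ∀ f ∈ List.ofFn P, ∀ y : X, ‖f y - a‖ ^ 2 + ‖f y - y‖ ^ 2 ≤ ‖y - a‖ ^ 2 := by
      intro f hf y
      obtain ⟨i, rfl⟩ := List.mem_ofFn.mp hf
      exact fejer_ineq (hcv i) (hP i) (haA i) y
    have hall := chain_fix a (List.ofFn P) hF x hfix
    intro i
    have hi : P i x = x := hall (P i) (List.mem_ofFn.mpr ⟨i, rfl⟩)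
    have := (hP i x).1
    rwa [hi] at this
  · intro hx
    apply foldl_fix
    intro f hf
    obtain ⟨i, rfl⟩ := List.mem_ofFn.mp hf
    have := (hP i x).2 x (hx i)
    simp only [sub_self, norm_zero] at this
    have h0 : ‖P i x - x‖ = 0 := le_antisymm this (norm_nonneg _)
    rwa [norm_eq_zero, sub_eq_zero] at h0
end

section
/- Let X be a real Hilbert space, let A₁, …, A_m be nonempty closed convex subsets of X with nonempty intersection A = ⋂ᵢ Aᵢ, let T = P_{A_m} ∘ ⋯ ∘ P_{A₁}, and let x⁽ᵏ⁺¹⁾ = T(x⁽ᵏ⁾) for an arbitrary initial point x⁽⁰⁾ ∈ X. Then every weak cluster point of the sequence (x⁽ᵏ⁾) lies in A; that is, if a subsequence x⁽ᵏ ⱼ⁾ converges weakly to some x* ∈ X, then x* ∈ ⋂ᵢ Aᵢ. -/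
open scoped RealInnerProductSpace
open Filter

/-- Partial composition: apply `P 0, P 1, …, P (n-1)` in order (identity beyond `m`). -/
def chainProj {X : Type*} {m : ℕ} (P : Fin m → X → X) : ℕ → X → X
  | 0, x => x
  | (n + 1), x => if h : n < m then P ⟨n, h⟩ (chainProj P n x) else chainProj P n x

lemma chainProj_eq_foldl {X : Type*} {m : ℕ} (P : Fin m → X → X) (n : ℕ) (x : X) :
    chainProj P n x = ((List.ofFn P).take n).foldl (fun y f => f y) x := by
  induction n with
  | zero => simp [chainProj]
  | succ n ih =>
    by_cases h : n < m
    · have hlen : n < (List.ofFn P).length := by simpa using h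
      rw [List.take_succ, List.getElem?_eq_getElem hlen, List.foldl_append]
      simp [chainProj, h, ih, List.getElem_ofFn]
    · have hlen : (List.ofFn P).length ≤ n := by simpa using Nat.le_of_not_lt h
      rw [List.take_of_length_le hlen, List.take_of_length_le (le_trans hlen (Nat.le_succ n))]
        at *
      simp [chainProj, h, ih]

lemma compProj_eq_chainProj {X : Type*} {m : ℕ} (P : Fin m → X → X) (x : X) :
    compProj P x = chainProj P m x := by
  rw [chainProj_eq_foldl, compProj]
  congr 1
  exact (List.take_of_length_le (by simp)).symm

/-- Key obtuse-angle inequality for the metric projection onto a convex set. -/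
lemma proj_inner_le {X : Type*} [NormedAddCommGroup X] [InnerProductSpace ℝ X]
    {C : Set X} {P : X → X} (hcv : Convex ℝ C) (hP : IsMetricProjection C P)
    (x : X) {a : X} (ha : a ∈ C) : ⟪x - P x, a - P x⟫ ≤ 0 := by
  have hmem := (hP x).1
  have hnorm : ‖x - P x‖ = ⨅ w : C, ‖x - w‖ := by
    have hne : Nonempty C := ⟨⟨a, ha⟩⟩
    refine le_antisymm (le_ciInf fun w => ?_) (ciInf_le ⟨0, fun r hr => ?_⟩ (⟨P x, hmem⟩ : C))
    · rw [norm_sub_rev, norm_sub_rev x]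
      exact (hP x).2 w w.2
    · obtain ⟨w, rfl⟩ := hr
      exact norm_nonneg _
  exact (norm_eq_iInf_iff_real_inner_le_zero hcv hmem).1 hnorm a ha

/-- Pythagoras-type inequality for the metric projection. -/
lemma proj_sq {X : Type*} [NormedAddCommGroup X] [InnerProductSpace ℝ X]
    {C : Set X} {P : X → X} (hcv : Convex ℝ C) (hP : IsMetricProjection C P)
    (x : X) {a : X} (ha : a ∈ C) :
    ‖P x - x‖ ^ 2 + ‖P x - a‖ ^ 2 ≤ ‖x - a‖ ^ 2 := by
  have h := proj_inner_le hcv hP x ha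
  have hsplit : x - a = (x - P x) + (P x - a) := by abel
  have h2 : (0:ℝ) ≤ ⟪x - P x, P x - a⟫ := by
    have : P x - a = -(a - P x) := by abel
    rw [this, inner_neg_right]
    linarith
  have hnorm : ‖x - P x‖ = ‖P x - x‖ := norm_sub_rev _ _
  calc ‖P x - x‖ ^ 2 + ‖P x - a‖ ^ 2
      ≤ ‖x - P x‖ ^ 2 + 2 * ⟪x - P x, P x - a⟫ + ‖P x - a‖ ^ 2 := by rw [hnorm]; linarith
    _ = ‖(x - P x) + (P x - a)‖ ^ 2 := (norm_add_sq_real _ _).symm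
    _ = ‖x - a‖ ^ 2 := by rw [← hsplit]

/-- Every weak cluster point of the iterates of the composed projection operator
lies in the intersection of the constraint sets. -/
theorem weak_cluster_points_mem_intersection
    {X : Type*} [NormedAddCommGroup X] [InnerProductSpace ℝ X] [CompleteSpace X]
    {m : ℕ} (A : Fin m → Set X) (P : Fin m → X → X)
    (hne : ∀ i, (A i).Nonempty) (hcl : ∀ i, IsClosed (A i)) (hcv : ∀ i, Convex ℝ (A i))
    (hinter : (⋂ i, A i).Nonempty)
    (hP : ∀ i, IsMetricProjection (A i) (P i))
    (x : ℕ → X) (hx : ∀ k : ℕ, x (k + 1) = compProj P (x k))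
    (κ : ℕ → ℕ) (hκ : StrictMono κ) (xstar : X)
    (hweak : ∀ y : X,
      Filter.Tendsto (fun j => ⟪x (κ j), y⟫) Filter.atTop (nhds ⟪xstar, y⟫)) :
    xstar ∈ ⋂ i, A i := by
  obtain ⟨a, ha⟩ := hinter
  have haA : ∀ i, a ∈ A i := fun i => Set.mem_iInter.1 ha i
  -- the chain inequality
  have hgap : ∀ (u : X) (n : ℕ),
      ‖chainProj P (n + 1) u - chainProj P n u‖ ^ 2 + ‖chainProj P (n + 1) u - a‖ ^ 2
        ≤ ‖chainProj P n u - a‖ ^ 2 := by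
    intro u n
    by_cases h : n < m
    · have := proj_sq (hcv ⟨n, h⟩) (hP ⟨n, h⟩) (chainProj P n u) (haA ⟨n, h⟩)
      simpa [chainProj, h] using this
    · simp [chainProj, h]
  have hmono : ∀ (u : X) (n n' : ℕ), n ≤ n' →
      ‖chainProj P n' u - a‖ ^ 2 ≤ ‖chainProj P n u - a‖ ^ 2 := by
    intro u
    have : Antitone fun n => ‖chainProj P n u - a‖ ^ 2 := by
      apply antitone_nat_of_succ_le
      intro n
      have := hgap u n
      nlinarith [sq_nonneg ‖chainProj P (n + 1) u - chainProj P n u‖]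
    exact fun n n' h => this h
  set D : ℕ → ℝ := fun k => ‖x k - a‖ ^ 2 with hD
  have hxch : ∀ k, x (k + 1) = chainProj P m (x k) := fun k => by
    rw [hx k, compProj_eq_chainProj]
  have hDanti : Antitone D := by
    apply antitone_nat_of_succ_le
    intro k
    have := hmono (x k) 0 m (Nat.zero_le m)
    simpa [hD, chainProj, hxch k] using this
  have hDlim : Tendsto D atTop (nhds (⨅ k, D k)) := by
    apply tendsto_atTop_ciInf hDanti
    exact ⟨0, fun r hr => by obtain ⟨k, rfl⟩ := hr; positivity⟩
  have hsub : Tendsto (fun k => D k - D (k + 1)) atTop (nhds 0) := by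
    have h2 : Tendsto (fun k => D (k + 1)) atTop (nhds (⨅ k, D k)) :=
      hDlim.comp (tendsto_add_atTop_nat 1)
    simpa using hDlim.sub h2
  -- each gap (as a square) is bounded by successive D-differences
  have hgapD : ∀ (j k : ℕ),
      ‖chainProj P (j + 1) (x k) - chainProj P j (x k)‖ ^ 2 ≤ D k - D (k + 1) := by
    intro j k
    by_cases h : j < m
    · have h1 := hgap (x k) j
      have h2 : ‖chainProj P m (x k) - a‖ ^ 2 ≤ ‖chainProj P (j + 1) (x k) - a‖ ^ 2 :=
        hmono (x k) (j + 1) m h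
      have h3 : ‖chainProj P j (x k) - a‖ ^ 2 ≤ D k := by
        have := hmono (x k) 0 j (Nat.zero_le j)
        simpa [hD, chainProj] using this
      have h4 : D (k + 1) = ‖chainProj P m (x k) - a‖ ^ 2 := by
        show ‖x (k + 1) - a‖ ^ 2 = _
        rw [hxch k]
      linarith
    · have h0 : (0:ℝ) ≤ D k - D (k + 1) := sub_nonneg.2 (hDanti (Nat.le_succ k))
      simpa [chainProj, h] using h0
  -- gaps tend to zero in norm
  have hgap0 : ∀ j : ℕ,
      Tendsto (fun k => ‖chainProj P (j + 1) (x k) - chainProj P j (x k)‖) atTop (nhds 0) := by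
    intro j
    apply squeeze_zero (fun k => norm_nonneg _) (g := fun k => Real.sqrt (D k - D (k + 1)))
    · intro k
      rw [show ‖chainProj P (j+1) (x k) - chainProj P j (x k)‖ =
          Real.sqrt (‖chainProj P (j+1) (x k) - chainProj P j (x k)‖ ^ 2) by
        rw [Real.sqrt_sq (norm_nonneg _)]]
      exact Real.sqrt_le_sqrt (hgapD j k)
    · have := (Real.continuous_sqrt.tendsto 0).comp hsub
      simpa [Function.comp_def] using this
  -- partial compositions stay close to the iterates
  have hnear : ∀ j : ℕ, Tendsto (fun k => ‖chainProj P j (x k) - x k‖) atTop (nhds 0) := by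
    intro j
    induction j with
    | zero => simpa [chainProj] using (tendsto_const_nhds : Tendsto (fun _ : ℕ => (0:ℝ)) atTop _)
    | succ j ih =>
      apply squeeze_zero (fun k => norm_nonneg _)
        (g := fun k => ‖chainProj P (j + 1) (x k) - chainProj P j (x k)‖ +
          ‖chainProj P j (x k) - x k‖)
      · intro k
        have := norm_sub_le_norm_sub_add_norm_sub (chainProj P (j + 1) (x k))
          (chainProj P j (x k)) (x k)
        linarith
      · simpa using (hgap0 j).add ih
  -- now each A i is weakly sequentially closed; conclude
  refine Set.mem_iInter.2 fun i => ?_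
  set z : ℕ → X := fun n => chainProj P ((i : ℕ) + 1) (x (κ n)) with hz
  have hzmem : ∀ n, z n ∈ A i := by
    intro n
    have : chainProj P ((i : ℕ) + 1) (x (κ n)) = P i (chainProj P (i : ℕ) (x (κ n))) := by
      simp [chainProj, i.isLt]
    show chainProj P ((i : ℕ) + 1) (x (κ n)) ∈ A i
    rw [this]
    exact (hP i _).1
  have hzw : ∀ y : X, Tendsto (fun n => ⟪z n, y⟫) atTop (nhds ⟪xstar, y⟫) := by
    intro y
    have hd : Tendsto (fun n => ⟪z n - x (κ n), y⟫) atTop (nhds 0) := by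
      have h1 : Tendsto (fun n => ‖z n - x (κ n)‖) atTop (nhds 0) :=
        (hnear ((i : ℕ) + 1)).comp hκ.tendsto_atTop
      exact squeeze_zero_norm
        (fun n => by simpa using abs_real_inner_le_norm (z n - x (κ n)) y)
        (by simpa using h1.mul_const ‖y‖)
    have := hd.add (hweak y)
    simpa [inner_sub_left] using this
  by_contra hxs
  obtain ⟨f, u, hfu, hub⟩ := geometric_hahn_banach_point_closed (hcv i) (hcl i) hxs
  set y : X := (InnerProductSpace.toDual ℝ X).symm f with hy
  have hf : ∀ w : X, f w = ⟪w, y⟫ := by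
    intro w
    rw [real_inner_comm]
    have : InnerProductSpace.toDual ℝ X y = f := (InnerProductSpace.toDual ℝ X).apply_symm_apply f
    rw [← this, InnerProductSpace.toDual_apply_apply]
  have hft : Tendsto (fun n => f (z n)) atTop (nhds (f xstar)) := by
    simp only [hf]
    exact hzw y
  have hle : u ≤ f xstar :=
    ge_of_tendsto hft (Filter.Eventually.of_forall fun n => (hub _ (hzmem n)).le)
  linarith
end

section
/- Fix λ > 0 and define on ℝ² the three proximal maps prox_{λφ₁}(x) = ((x₁ + λ)/(1 + λ), x₂), prox_{λφ₂}(x) = (x₁, (x₂ + λ)/(1 + λ)), and prox_{λφ₃}(x) = x − (λ(x₁ + x₂ − 1)/(1 + 2λ))·(1, 1), associated with φ₁(x) = ½(x₁ − 1)², φ₂(x) = ½(x₂ − 1)², φ₃(x) = ½(x₁ + x₂ − 1)². Then the cyclic composition G = prox_{λφ₃} ∘ prox_{λφ₂} ∘ prox_{λφ₁} is a contraction on ℝ² (Lipschitz with constant strictly less than 1), and hence G has a unique fixed point. -/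
lemma cyclic_prox_aux (lam a b : ℝ) (hlam : 0 < lam) :
    (((1 + lam) * a - lam * b) / ((1 + lam) * (1 + 2 * lam))) ^ 2 +
      (((1 + lam) * b - lam * a) / ((1 + lam) * (1 + 2 * lam))) ^ 2 ≤
      (1 / (1 + lam)) ^ 2 * (a ^ 2 + b ^ 2) := by
  have h1 : (0:ℝ) < 1 + lam := by linarith
  have h2 : (0:ℝ) < 1 + 2 * lam := by linarith
  rw [div_pow, div_pow, ← add_div, div_le_iff₀ (by positivity)]
  have heq : (1 / (1 + lam)) ^ 2 * (a ^ 2 + b ^ 2) * ((1 + lam) * (1 + 2 * lam)) ^ 2 =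
      (1 + 2 * lam) ^ 2 * (a ^ 2 + b ^ 2) := by
    field_simp
  rw [heq]
  nlinarith [mul_nonneg (mul_nonneg hlam.le h1.le) (sq_nonneg (a + b))]

/-- For fixed `λ > 0`, the cyclic composition `G = prox_{λφ₃} ∘ prox_{λφ₂} ∘ prox_{λφ₁}`
of the three closed-form proximal maps is a contraction on `ℝ²` (Lipschitz with a
constant strictly less than 1), and hence has a unique fixed point. -/
theorem cyclic_prox_composition_is_contraction
    (lam : ℝ) (hlam : 0 < lam)
    (P₁ P₂ P₃ G : EuclideanSpace ℝ (Fin 2) → EuclideanSpace ℝ (Fin 2))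
    (hP₁ : ∀ x : EuclideanSpace ℝ (Fin 2),
      P₁ x 0 = (x 0 + lam) / (1 + lam) ∧ P₁ x 1 = x 1)
    (hP₂ : ∀ x : EuclideanSpace ℝ (Fin 2),
      P₂ x 0 = x 0 ∧ P₂ x 1 = (x 1 + lam) / (1 + lam))
    (hP₃ : ∀ x : EuclideanSpace ℝ (Fin 2),
      P₃ x 0 = x 0 - lam * (x 0 + x 1 - 1) / (1 + 2 * lam) ∧
      P₃ x 1 = x 1 - lam * (x 0 + x 1 - 1) / (1 + 2 * lam))
    (hG : ∀ x : EuclideanSpace ℝ (Fin 2), G x = P₃ (P₂ (P₁ x))) :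
    (∃ c : ℝ, 0 ≤ c ∧ c < 1 ∧
      ∀ x y : EuclideanSpace ℝ (Fin 2), ‖G x - G y‖ ≤ c * ‖x - y‖) ∧
    ∃! z : EuclideanSpace ℝ (Fin 2), G z = z := by
  have h1 : (0:ℝ) < 1 + lam := by linarith
  have h2 : (0:ℝ) < 1 + 2 * lam := by linarith
  have hc0 : (0:ℝ) ≤ 1 / (1 + lam) := by positivity
  have hc1 : 1 / (1 + lam) < 1 := by rw [div_lt_one h1]; linarith
  have hlip : ∀ x y : EuclideanSpace ℝ (Fin 2),
      ‖G x - G y‖ ≤ (1 / (1 + lam)) * ‖x - y‖ := by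
    intro x y
    have hx3 := hP₃ (P₂ (P₁ x)); have hy3 := hP₃ (P₂ (P₁ y))
    have hx2 := hP₂ (P₁ x); have hy2 := hP₂ (P₁ y)
    have hx1 := hP₁ x; have hy1 := hP₁ y
    have e0 : (G x - G y) 0 =
        ((1 + lam) * (x 0 - y 0) - lam * (x 1 - y 1)) / ((1 + lam) * (1 + 2 * lam)) := by
      simp only [PiLp.sub_apply, hG, hx3.1, hy3.1, hx2.1, hx2.2, hy2.1, hy2.2,
        hx1.1, hx1.2, hy1.1, hy1.2]
      field_simp
      ring
    have e1 : (G x - G y) 1 =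
        ((1 + lam) * (x 1 - y 1) - lam * (x 0 - y 0)) / ((1 + lam) * (1 + 2 * lam)) := by
      simp only [PiLp.sub_apply, hG, hx3.2, hy3.2, hx2.1, hx2.2, hy2.1, hy2.2,
        hx1.1, hx1.2, hy1.1, hy1.2]
      field_simp
      ring
    rw [EuclideanSpace.norm_eq, EuclideanSpace.norm_eq]
    rw [show (1 / (1 + lam)) = Real.sqrt ((1 / (1 + lam)) ^ 2) from (Real.sqrt_sq hc0).symm,
      ← Real.sqrt_mul (by positivity)]
    apply Real.sqrt_le_sqrt
    simp only [Fin.sum_univ_two, Real.norm_eq_abs, sq_abs]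
    rw [e0, e1]
    have := cyclic_prox_aux lam (x 0 - y 0) (x 1 - y 1) hlam
    calc (((1 + lam) * (x 0 - y 0) - lam * (x 1 - y 1)) / ((1 + lam) * (1 + 2 * lam))) ^ 2 +
        (((1 + lam) * (x 1 - y 1) - lam * (x 0 - y 0)) / ((1 + lam) * (1 + 2 * lam))) ^ 2
        ≤ (1 / (1 + lam)) ^ 2 * ((x 0 - y 0) ^ 2 + (x 1 - y 1) ^ 2) := this
      _ = (1 / (1 + lam)) ^ 2 * ((x - y) 0 ^ 2 + (x - y) 1 ^ 2) := by
          simp [PiLp.sub_apply]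
  refine ⟨⟨1 / (1 + lam), hc0, hc1, hlip⟩, ?_⟩
  have hlipw : LipschitzWith ⟨1 / (1 + lam), hc0⟩ G := by
    apply LipschitzWith.of_dist_le_mul
    intro x y
    rw [dist_eq_norm, dist_eq_norm]
    exact hlip x y
  have hcontr : ContractingWith ⟨1 / (1 + lam), hc0⟩ G := ⟨by exact_mod_cast hc1, hlipw⟩
  exact ⟨ContractingWith.fixedPoint G hcontr, hcontr.fixedPoint_isFixedPt,
    fun z hz => hcontr.fixedPoint_unique hz⟩
end

section
/- Define on ℝ² the penalties φ₁(x) = ½(x₁ − 1)², φ₂(x) = ½(x₂ − 1)², φ₃(x) = ½(x₁ + x₂ − 1)², and let (λₖ)ₖ≥₁ be positive step sizes with Σₖ λₖ = ∞ and Σₖ λₖ² < ∞. Then for any initial point x⁽⁰⁾ ∈ ℝ², the cyclic proximal iterates x⁽ᵏ⁺¹⁾ = prox_{λₖφ₃} ∘ prox_{λₖφ₂} ∘ prox_{λₖφ₁}(x⁽ᵏ⁾) converge to x* = (2/3, 2/3), the unique minimizer of F = φ₁ + φ₂ + φ₃. -/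
open Filter
open Filter

lemma tendsto_zero_of_rec (a l : ℕ → ℝ) (c : ℝ) (hc : 0 ≤ c)
    (ha : ∀ k, 0 ≤ a k) (hl : ∀ k, 0 ≤ l k)
    (hdiv : ¬ Summable l) (hsq : Summable (fun k => l k ^ 2)) (N : ℕ)
    (hrec : ∀ k, N ≤ k → a (k + 1) ≤ (1 - l k / 2) * a k + c * l k ^ 2) :
    Tendsto a atTop (nhds 0) := by
  set S : ℕ → ℝ := fun n => ∑ k ∈ Finset.range n, l k ^ 2 with hSdef
  have hScauchy : CauchySeq S := (hsq.hasSum.tendsto_sum_nat).cauchySeq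
  have hSmono : Monotone S := by
    apply monotone_nat_of_le_succ
    intro n
    simp only [hSdef, Finset.sum_range_succ]
    nlinarith [sq_nonneg (l n)]
  set T : ℕ → ℝ := fun n => ∑ k ∈ Finset.range n, l k with hTdef
  have hT : Tendsto T atTop atTop :=
    (not_summable_iff_tendsto_nat_atTop_of_nonneg hl).mp hdiv
  -- step bound valid for all k ≥ N: a (k+1) ≤ a k + c * l k ^ 2
  have hstep : ∀ k, N ≤ k → a (k + 1) ≤ a k + c * l k ^ 2 := by
    intro k hk
    have := hrec k hk
    nlinarith [ha k, hl k]
  -- growth bound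
  have hgrow : ∀ k, N ≤ k → ∀ n, k ≤ n → a n ≤ a k + c * (S n - S k) := by
    intro k hk n hn
    induction n, hn using Nat.le_induction with
    | base => simp
    | succ n hn ih =>
      have h1 := hstep n (le_trans hk hn)
      have h2 : S (n + 1) = S n + l n ^ 2 := by
        simp [hSdef, Finset.sum_range_succ]
      nlinarith
  rw [Metric.tendsto_atTop]
  intro ε hε
  set δ : ℝ := ε / (4 * (c + 1)) with hδdef
  have hδ : 0 < δ := by positivity
  obtain ⟨M₁, hM₁⟩ := Metric.cauchySeq_iff.mp hScauchy δ hδ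
  set M : ℕ := max N M₁ with hMdef
  have hMN : N ≤ M := le_max_left _ _
  have hMM₁ : M₁ ≤ M := le_max_right _ _
  -- tail sums of squares are small
  have htail : ∀ k, M ≤ k → ∀ n, k ≤ n → S n - S k < δ := by
    intro k hk n hn
    have := hM₁ n (le_trans hMM₁ (le_trans hk hn)) k (le_trans hMM₁ hk)
    rw [Real.dist_eq] at this
    have := abs_lt.mp this
    linarith [this.1, this.2]
  have hcδ : c * δ ≤ ε / 4 := by
    have h0 : 0 < 4 * (c + 1) := by positivity
    rw [hδdef, ← mul_div_assoc, div_le_div_iff₀ h0 (by norm_num : (0:ℝ) < 4)]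
    nlinarith
  -- there exists k ≥ M with a k < ε/2
  have hexists : ∃ k, M ≤ k ∧ a k < ε / 2 := by
    by_contra hcon
    push_neg at hcon
    -- then descent: for all n ≥ M, a n ≤ a M - (ε/4)*(T n - T M) + c*(S n - S M)
    have hdesc : ∀ n, M ≤ n → a n ≤ a M - ε / 4 * (T n - T M) + c * (S n - S M) := by
      intro n hn
      induction n, hn using Nat.le_induction with
      | base => simp
      | succ n hn ih =>
        have hrk := hrec n (le_trans hMN hn)
        have haM := hcon n hn
        have hTn : T (n + 1) = T n + l n := by simp [hTdef, Finset.sum_range_succ]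
        have hSn : S (n + 1) = S n + l n ^ 2 := by simp [hSdef, Finset.sum_range_succ]
        -- a (n+1) ≤ a n - (l n / 2) * a n + c * l n ^2 ≤ a n - (l n/2)*(ε/2) + c * l n^2
        have : a (n + 1) ≤ a n - l n / 2 * (ε / 2) + c * l n ^ 2 := by
          nlinarith [hl n, hε]
        nlinarith [hl n]
    -- contradiction from T → ∞
    obtain ⟨n, hn1, hn2⟩ := ((hT.eventually_gt_atTop ((a M + c * δ) * 4 / ε + T M)).and
      (eventually_ge_atTop M)).exists
    have h1 := hdesc n hn2
    have h2 : S n - S M < δ := htail M le_rfl n hn2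
    have h3 : 0 ≤ a n := ha n
    have h4 : (a M + c * δ) * 4 / ε + T M < T n := hn1
    have h5 : c * (S n - S M) ≤ c * δ := by nlinarith
    have h6 : (a M + c * δ) * 4 / ε < T n - T M := by linarith
    have h7 : a M + c * δ < ε / 4 * (T n - T M) := by
      rw [div_lt_iff₀ hε] at h6
      nlinarith
    linarith
  obtain ⟨k₀, hk₀M, hk₀⟩ := hexists
  refine ⟨k₀, fun n hn => ?_⟩
  have h1 := hgrow k₀ (le_trans hMN hk₀M) n hn
  have h2 : S n - S k₀ < δ := htail k₀ hk₀M n hn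
  have h3 : c * (S n - S k₀) ≤ c * δ := by
    have h4 : S k₀ ≤ S n := hSmono hn
    nlinarith
  rw [Real.dist_eq, sub_zero, abs_of_nonneg (ha n)]
  linarith

lemma nsq (y : EuclideanSpace ℝ (Fin 2)) : ‖y‖ ^ 2 = y 0 ^ 2 + y 1 ^ 2 := by
  rw [EuclideanSpace.norm_eq, Real.sq_sqrt (by positivity)]
  simp [Fin.sum_univ_two]

lemma prox1_coords (l : ℝ) (hl : 0 < l) (x Q : EuclideanSpace ℝ (Fin 2))
    (h : ∀ z : EuclideanSpace ℝ (Fin 2),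
      1/2 * (Q 0 - 1) ^ 2 + 1/(2*l) * ‖Q - x‖ ^ 2 ≤ 1/2 * (z 0 - 1) ^ 2 + 1/(2*l) * ‖z - x‖ ^ 2) :
    Q 0 = (x 0 + l) / (1 + l) ∧ Q 1 = x 1 := by
  have h1l : (0:ℝ) < 1 + l := by linarith
  set q : ℝ := (x 0 + l) / (1 + l) with hq
  set p : EuclideanSpace ℝ (Fin 2) := (WithLp.equiv 2 (Fin 2 → ℝ)).symm ![q, x 1] with hp
  have hp0 : p 0 = q := by simp [hp]
  have hp1 : p 1 = x 1 := by simp [hp]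
  have h2 := h p
  rw [nsq (Q - x), nsq (p - x)] at h2
  simp only [PiLp.sub_apply, hp0, hp1, sub_self] at h2
  have key : (1/2 * (q - 1) ^ 2 + 1/(2*l) * ((q - x 0) ^ 2 + 0 ^ 2))
      - (1/2 * (Q 0 - 1) ^ 2 + 1/(2*l) * ((Q 0 - x 0) ^ 2 + (Q 1 - x 1) ^ 2))
      = -(1/(2*l)) * ((1 + l) * (Q 0 - q) ^ 2 + (Q 1 - x 1) ^ 2) := by
    rw [hq]; field_simp; ring
  have hc : (0:ℝ) < 1/(2*l) := by positivity
  have h4 : 1/(2*l) * ((1 + l) * (Q 0 - q) ^ 2 + (Q 1 - x 1) ^ 2) ≤ 1/(2*l) * 0 := by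
    rw [mul_zero]; linarith [h2, key]
  have hsum := le_of_mul_le_mul_left h4 hc
  have ha0 : 0 ≤ (Q 0 - q) ^ 2 := sq_nonneg _
  have hb0 : 0 ≤ (Q 1 - x 1) ^ 2 := sq_nonneg _
  have hma : 0 ≤ (1 + l) * (Q 0 - q) ^ 2 := mul_nonneg h1l.le ha0
  have e1 : (Q 1 - x 1) ^ 2 = 0 := le_antisymm (by linarith) hb0
  have h5 : (1 + l) * (Q 0 - q) ^ 2 ≤ (1 + l) * 0 := by rw [mul_zero]; linarith
  have e0 : (Q 0 - q) ^ 2 = 0 := le_antisymm (le_of_mul_le_mul_left h5 h1l) ha0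
  exact ⟨by have := sq_eq_zero_iff.mp e0; linarith, by have := sq_eq_zero_iff.mp e1; linarith⟩

lemma nsq' (y : EuclideanSpace ℝ (Fin 2)) : ‖y‖ ^ 2 = y 0 ^ 2 + y 1 ^ 2 := by
  rw [EuclideanSpace.norm_eq, Real.sq_sqrt (by positivity)]
  simp [Fin.sum_univ_two]

lemma prox2_coords (l : ℝ) (hl : 0 < l) (x Q : EuclideanSpace ℝ (Fin 2))
    (h : ∀ z : EuclideanSpace ℝ (Fin 2),
      1/2 * (Q 1 - 1) ^ 2 + 1/(2*l) * ‖Q - x‖ ^ 2 ≤ 1/2 * (z 1 - 1) ^ 2 + 1/(2*l) * ‖z - x‖ ^ 2) :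
    Q 0 = x 0 ∧ Q 1 = (x 1 + l) / (1 + l) := by
  have h1l : (0:ℝ) < 1 + l := by linarith
  set q : ℝ := (x 1 + l) / (1 + l) with hq
  set p : EuclideanSpace ℝ (Fin 2) := (WithLp.equiv 2 (Fin 2 → ℝ)).symm ![x 0, q] with hp
  have hp0 : p 0 = x 0 := by simp [hp]
  have hp1 : p 1 = q := by simp [hp]
  have h2 := h p
  rw [nsq' (Q - x), nsq' (p - x)] at h2
  simp only [PiLp.sub_apply, hp0, hp1, sub_self] at h2
  have key : (1/2 * (q - 1) ^ 2 + 1/(2*l) * (0 ^ 2 + (q - x 1) ^ 2))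
      - (1/2 * (Q 1 - 1) ^ 2 + 1/(2*l) * ((Q 0 - x 0) ^ 2 + (Q 1 - x 1) ^ 2))
      = -(1/(2*l)) * ((1 + l) * (Q 1 - q) ^ 2 + (Q 0 - x 0) ^ 2) := by
    rw [hq]; field_simp; ring
  have hc : (0:ℝ) < 1/(2*l) := by positivity
  have h4 : 1/(2*l) * ((1 + l) * (Q 1 - q) ^ 2 + (Q 0 - x 0) ^ 2) ≤ 1/(2*l) * 0 := by
    rw [mul_zero]; linarith [h2, key]
  have hsum := le_of_mul_le_mul_left h4 hc
  have ha0 : 0 ≤ (Q 1 - q) ^ 2 := sq_nonneg _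
  have hb0 : 0 ≤ (Q 0 - x 0) ^ 2 := sq_nonneg _
  have hma : 0 ≤ (1 + l) * (Q 1 - q) ^ 2 := mul_nonneg h1l.le ha0
  have e1 : (Q 0 - x 0) ^ 2 = 0 := le_antisymm (by linarith) hb0
  have h5 : (1 + l) * (Q 1 - q) ^ 2 ≤ (1 + l) * 0 := by rw [mul_zero]; linarith
  have e0 : (Q 1 - q) ^ 2 = 0 := le_antisymm (le_of_mul_le_mul_left h5 h1l) ha0
  exact ⟨by have := sq_eq_zero_iff.mp e1; linarith, by have := sq_eq_zero_iff.mp e0; linarith⟩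

lemma prox3_coords (l : ℝ) (hl : 0 < l) (x Q : EuclideanSpace ℝ (Fin 2))
    (h : ∀ z : EuclideanSpace ℝ (Fin 2),
      1/2 * (Q 0 + Q 1 - 1) ^ 2 + 1/(2*l) * ‖Q - x‖ ^ 2
        ≤ 1/2 * (z 0 + z 1 - 1) ^ 2 + 1/(2*l) * ‖z - x‖ ^ 2) :
    Q 0 = x 0 - l * (x 0 + x 1 - 1) / (1 + 2*l) ∧
    Q 1 = x 1 - l * (x 0 + x 1 - 1) / (1 + 2*l) := by
  have h1l : (0:ℝ) < 1 + 2*l := by linarith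
  set p0 : ℝ := x 0 - l * (x 0 + x 1 - 1) / (1 + 2*l) with hp0d
  set p1 : ℝ := x 1 - l * (x 0 + x 1 - 1) / (1 + 2*l) with hp1d
  set p : EuclideanSpace ℝ (Fin 2) := (WithLp.equiv 2 (Fin 2 → ℝ)).symm ![p0, p1] with hp
  have hp0 : p 0 = p0 := by simp [hp]
  have hp1 : p 1 = p1 := by simp [hp]
  have h2 := h p
  rw [nsq' (Q - x), nsq' (p - x)] at h2
  simp only [PiLp.sub_apply, hp0, hp1] at h2
  have key : (1/2 * (p0 + p1 - 1) ^ 2 + 1/(2*l) * ((p0 - x 0) ^ 2 + (p1 - x 1) ^ 2))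
      - (1/2 * (Q 0 + Q 1 - 1) ^ 2 + 1/(2*l) * ((Q 0 - x 0) ^ 2 + (Q 1 - x 1) ^ 2))
      = -(1/(2*l)) * (l * ((Q 0 - p0) + (Q 1 - p1)) ^ 2 + (Q 0 - p0) ^ 2 + (Q 1 - p1) ^ 2) := by
    rw [hp0d, hp1d]; field_simp; ring
  have hc : (0:ℝ) < 1/(2*l) := by positivity
  have h4 : 1/(2*l) * (l * ((Q 0 - p0) + (Q 1 - p1)) ^ 2 + (Q 0 - p0) ^ 2 + (Q 1 - p1) ^ 2)
      ≤ 1/(2*l) * 0 := by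
    rw [mul_zero]; linarith [h2, key]
  have hsum := le_of_mul_le_mul_left h4 hc
  have ha0 : 0 ≤ (Q 0 - p0) ^ 2 := sq_nonneg _
  have hb0 : 0 ≤ (Q 1 - p1) ^ 2 := sq_nonneg _
  have hma : 0 ≤ l * ((Q 0 - p0) + (Q 1 - p1)) ^ 2 := mul_nonneg hl.le (sq_nonneg _)
  have e0 : (Q 0 - p0) ^ 2 = 0 := le_antisymm (by linarith) ha0
  have e1 : (Q 1 - p1) ^ 2 = 0 := le_antisymm (by linarith) hb0
  exact ⟨by have := sq_eq_zero_iff.mp e0; linarith, by have := sq_eq_zero_iff.mp e1; linarith⟩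


/-- For the penalties `φ₁(x) = ½(x₁−1)²`, `φ₂(x) = ½(x₂−1)²`, `φ₃(x) = ½(x₁+x₂−1)²`
on `ℝ²` and positive step sizes `λₖ` with `∑ λₖ = ∞` and `∑ λₖ² < ∞`, the cyclic
proximal iterates `x⁽ᵏ⁺¹⁾ = prox_{λₖφ₃} ∘ prox_{λₖφ₂} ∘ prox_{λₖφ₁}(x⁽ᵏ⁾)` converge
from any initial point to `x* = (2/3, 2/3)`, the unique minimizer of
`F = φ₁ + φ₂ + φ₃`. -/
theorem cyclic_proximal_iterates_converge_to_xstar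
    (φ₁ φ₂ φ₃ : EuclideanSpace ℝ (Fin 2) → ℝ)
    (hφ₁ : ∀ z : EuclideanSpace ℝ (Fin 2), φ₁ z = 1/2 * (z 0 - 1) ^ 2)
    (hφ₂ : ∀ z : EuclideanSpace ℝ (Fin 2), φ₂ z = 1/2 * (z 1 - 1) ^ 2)
    (hφ₃ : ∀ z : EuclideanSpace ℝ (Fin 2), φ₃ z = 1/2 * (z 0 + z 1 - 1) ^ 2)
    -- step sizes
    (lam : ℕ → ℝ) (hlam : ∀ k, 0 < lam k)
    (hdiv : ¬ Summable lam) (hsq : Summable fun k => lam k ^ 2)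
    -- P₁ l, P₂ l, P₃ l are the proximal operators of φ₁, φ₂, φ₃ with parameter l > 0
    (P₁ P₂ P₃ : ℝ → EuclideanSpace ℝ (Fin 2) → EuclideanSpace ℝ (Fin 2))
    (hP₁ : ∀ l : ℝ, 0 < l → ∀ x z : EuclideanSpace ℝ (Fin 2),
      φ₁ (P₁ l x) + 1 / (2 * l) * ‖P₁ l x - x‖ ^ 2 ≤ φ₁ z + 1 / (2 * l) * ‖z - x‖ ^ 2)
    (hP₂ : ∀ l : ℝ, 0 < l → ∀ x z : EuclideanSpace ℝ (Fin 2),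
      φ₂ (P₂ l x) + 1 / (2 * l) * ‖P₂ l x - x‖ ^ 2 ≤ φ₂ z + 1 / (2 * l) * ‖z - x‖ ^ 2)
    (hP₃ : ∀ l : ℝ, 0 < l → ∀ x z : EuclideanSpace ℝ (Fin 2),
      φ₃ (P₃ l x) + 1 / (2 * l) * ‖P₃ l x - x‖ ^ 2 ≤ φ₃ z + 1 / (2 * l) * ‖z - x‖ ^ 2)
    -- the cyclic proximal iteration
    (x : ℕ → EuclideanSpace ℝ (Fin 2))
    (hx : ∀ k : ℕ, x (k + 1) = P₃ (lam k) (P₂ (lam k) (P₁ (lam k) (x k))))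
    (xstar : EuclideanSpace ℝ (Fin 2))
    (hxstar : xstar 0 = 2/3 ∧ xstar 1 = 2/3) :
    Filter.Tendsto x Filter.atTop (nhds xstar) := by
  -- abbreviations
  set u : ℕ → ℝ := fun k => x k 0 + x k 1 with hu_def
  set v : ℕ → ℝ := fun k => x k 0 - x k 1 with hv_def
  -- coordinate recurrences
  have hrecuv : ∀ k : ℕ,
      u (k + 1) = (u k + 4 * lam k + 2 * lam k ^ 2) / (1 + 3 * lam k + 2 * lam k ^ 2) ∧
      v (k + 1) = v k / (1 + lam k) := by
    intro k
    set l : ℝ := lam k with hl_def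
    have hl : 0 < l := hlam k
    have h1l : (0:ℝ) < 1 + l := by linarith
    have h2l : (0:ℝ) < 1 + 2 * l := by linarith
    have h1 := prox1_coords l hl (x k) (P₁ l (x k))
      (fun z => by simpa [hφ₁] using hP₁ l hl (x k) z)
    have h2 := prox2_coords l hl (P₁ l (x k)) (P₂ l (P₁ l (x k)))
      (fun z => by simpa [hφ₂] using hP₂ l hl (P₁ l (x k)) z)
    have h3 := prox3_coords l hl (P₂ l (P₁ l (x k))) (P₃ l (P₂ l (P₁ l (x k))))
      (fun z => by simpa [hφ₃] using hP₃ l hl (P₂ l (P₁ l (x k))) z)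
    have hy20 : P₂ l (P₁ l (x k)) 0 = (x k 0 + l) / (1 + l) := by rw [h2.1, h1.1]
    have hy21 : P₂ l (P₁ l (x k)) 1 = (x k 1 + l) / (1 + l) := by rw [h2.2, h1.2]
    have hx0 : x (k + 1) 0 = (x k 0 + l) / (1 + l)
        - l * ((x k 0 + l) / (1 + l) + (x k 1 + l) / (1 + l) - 1) / (1 + 2 * l) := by
      rw [hx k, h3.1, hy20, hy21]
    have hx1 : x (k + 1) 1 = (x k 1 + l) / (1 + l)
        - l * ((x k 0 + l) / (1 + l) + (x k 1 + l) / (1 + l) - 1) / (1 + 2 * l) := by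
      rw [hx k, h3.2, hy20, hy21]
    constructor
    · show x (k + 1) 0 + x (k + 1) 1 = _
      rw [hx0, hx1]
      field_simp
      ring
    · show x (k + 1) 0 - x (k + 1) 1 = _
      rw [hx0, hx1]
      field_simp
      ring
  -- lam tends to 0
  have hlam0 : Tendsto lam atTop (nhds 0) := by
    have h1 : Tendsto (fun k => Real.sqrt (lam k ^ 2)) atTop (nhds 0) := by
      have h2 := (Real.continuous_sqrt.tendsto 0).comp hsq.tendsto_atTop_zero
      simpa [Function.comp_def] using h2
    refine h1.congr fun k => ?_
    rw [Real.sqrt_sq (hlam k).le]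
  have hev : ∀ᶠ k in atTop, lam k < 1 := hlam0.eventually_lt_const (by norm_num)
  obtain ⟨N, hN⟩ := eventually_atTop.mp hev
  -- recurrence inequalities for |u - 4/3| and |v|
  have hrecU : ∀ k, N ≤ k → |u (k + 1) - 4/3| ≤ (1 - lam k / 2) * |u k - 4/3| + 2/3 * lam k ^ 2 := by
    intro k hk
    set l : ℝ := lam k with hl_def
    have hl : 0 < l := hlam k
    have hl1 : l < 1 := hN k hk
    have hD : (0:ℝ) < 1 + 3 * l + 2 * l ^ 2 := by positivity
    have heq : u (k + 1) - 4/3 = ((u k - 4/3) - 2/3 * l ^ 2) / (1 + 3 * l + 2 * l ^ 2) := by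
      rw [(hrecuv k).1, ← hl_def]
      field_simp
      ring
    rw [heq, abs_div, abs_of_pos hD, div_le_iff₀ hD]
    have hnum : |(u k - 4/3) - 2/3 * l ^ 2| ≤ |u k - 4/3| + 2/3 * l ^ 2 := by
      have hA1 := neg_abs_le (u k - 4/3)
      have hA2 := le_abs_self (u k - 4/3)
      have hp : (0:ℝ) ≤ 2/3 * l ^ 2 := by positivity
      rw [abs_le]
      constructor <;> [skip; skip] <;> nlinarith [abs_nonneg (u k - 4/3)]
    nlinarith [abs_nonneg (u k - 4/3), mul_nonneg (abs_nonneg (u k - 4/3)) hl.le,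
      mul_nonneg (mul_nonneg (abs_nonneg (u k - 4/3)) hl.le) hl.le,
      mul_nonneg (mul_nonneg (mul_nonneg (abs_nonneg (u k - 4/3)) hl.le) hl.le) hl.le,
      sq_nonneg l, mul_pos hl hl, mul_pos (mul_pos hl hl) hl]
  have hrecV : ∀ k, N ≤ k → |v (k + 1)| ≤ (1 - lam k / 2) * |v k| + 0 * lam k ^ 2 := by
    intro k hk
    set l : ℝ := lam k with hl_def
    have hl : 0 < l := hlam k
    have hl1 : l < 1 := hN k hk
    have h1l : (0:ℝ) < 1 + l := by linarith
    rw [(hrecuv k).2, abs_div, abs_of_pos h1l, div_le_iff₀ h1l]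
    nlinarith [abs_nonneg (v k), mul_nonneg (abs_nonneg (v k)) hl.le,
      mul_nonneg (mul_nonneg (abs_nonneg (v k)) hl.le) hl.le]
  have hU : Tendsto (fun k => |u k - 4/3|) atTop (nhds 0) :=
    tendsto_zero_of_rec (fun k => |u k - 4/3|) lam (2/3) (by norm_num)
      (fun k => abs_nonneg _) (fun k => (hlam k).le) hdiv hsq N hrecU
  have hV : Tendsto (fun k => |v k|) atTop (nhds 0) :=
    tendsto_zero_of_rec (fun k => |v k|) lam 0 le_rfl
      (fun k => abs_nonneg _) (fun k => (hlam k).le) hdiv hsq N hrecV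
  have hu43 : Tendsto u atTop (nhds (4/3)) := by
    rw [← tendsto_sub_nhds_zero_iff]
    exact (tendsto_zero_iff_abs_tendsto_zero _).mpr hU
  have hv0 : Tendsto v atTop (nhds 0) :=
    (tendsto_zero_iff_abs_tendsto_zero _).mpr hV
  have hx0 : Tendsto (fun k => x k 0) atTop (nhds (2/3)) := by
    have h1 := (hu43.add hv0).div_const 2
    have h2 : (4/3 + 0) / 2 = (2/3 : ℝ) := by norm_num
    rw [h2] at h1
    refine h1.congr fun k => ?_
    show (u k + v k) / 2 = x k 0
    simp only [hu_def, hv_def]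
    ring
  have hx1 : Tendsto (fun k => x k 1) atTop (nhds (2/3)) := by
    have h1 := (hu43.sub hv0).div_const 2
    have h2 : (4/3 - 0) / 2 = (2/3 : ℝ) := by norm_num
    rw [h2] at h1
    refine h1.congr fun k => ?_
    show (u k - v k) / 2 = x k 1
    simp only [hu_def, hv_def]
    ring
  -- conclude
  rw [tendsto_iff_norm_sub_tendsto_zero]
  have hsum0 : Tendsto (fun k => (x k 0 - 2/3) ^ 2 + (x k 1 - 2/3) ^ 2) atTop (nhds 0) := by
    have h0 : Tendsto (fun k => x k 0 - 2/3) atTop (nhds 0) := by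
      rw [tendsto_sub_nhds_zero_iff]; exact hx0
    have h1 : Tendsto (fun k => x k 1 - 2/3) atTop (nhds 0) := by
      rw [tendsto_sub_nhds_zero_iff]; exact hx1
    have := (h0.mul h0).add (h1.mul h1)
    simp only [mul_zero, add_zero] at this
    refine this.congr fun k => ?_
    ring
  have hsqrt := (Real.continuous_sqrt.tendsto 0).comp hsum0
  simp only [Real.sqrt_zero, Function.comp] at hsqrt
  refine hsqrt.congr fun k => ?_
  rw [← Real.sqrt_sq (norm_nonneg (x k - xstar)), nsq]
  simp only [PiLp.sub_apply, hxstar.1, hxstar.2]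
  rfl
end
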